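/- Let E be a k-quasi-complete Hausdorff locally convex space over ℝ. Equip E with the γ-topology γ(E,E') of uniform convergence on the absolutely convex compact subsets of the Arens dual E'_c (this is a topology on E itself: every point of E defines a continuous linear functional on E'_c, and by the Mackey–Arens theorem every continuous linear functional on E'_c arises this way). Then (E, γ(E,E')) is again k-quasi-complete. -/

import Mathlib

open Filter Topology Set Bornology Pointwise

/-- A sequence in a locally convex space is *Mackey-Cauchy* if there are a bounded
absolutely convex set `B` and a double sequence of nonnegative reals `c` tending to `0`
such that `x n - x m ∈ c n m • B` for all `n, m`. -/
def MackeyCauchy (E : Type*) [AddCommGroup E] [Module ℝ E] [TopologicalSpace E]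
    (x : ℕ → E) : Prop :=
  ∃ (B : Set E) (c : ℕ → ℕ → ℝ),
    IsVonNBounded ℝ B ∧ Convex ℝ B ∧ Balanced ℝ B ∧
    (∀ n m, 0 ≤ c n m) ∧
    Tendsto (fun p : ℕ × ℕ => c p.1 p.2) atTop (𝓝 (0 : ℝ)) ∧
    ∀ n m, x n - x m ∈ c n m • B

/-- A locally convex space is *Mackey-complete* if every Mackey-Cauchy sequence converges. -/
def MackeyComplete (E : Type*) [AddCommGroup E] [Module ℝ E] [TopologicalSpace E] : Prop :=
  ∀ x : ℕ → E, MackeyCauchy E x → ∃ l : E, Tendsto x atTop (𝓝 l)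

/-- A locally convex space is *k-quasi-complete* if the closed absolutely convex hull of
every compact set is compact. -/
def KQuasiComplete (E : Type*) [AddCommGroup E] [Module ℝ E] [TopologicalSpace E] : Prop :=
  ∀ K : Set E, IsCompact K → IsCompact (closure (convexHull ℝ (balancedHull ℝ K)))

variable (E : Type*) [AddCommGroup E] [Module ℝ E] [TopologicalSpace E]

/-- The Arens dual `E'_c`: the topological dual with the topology of uniform convergence on
absolutely convex compact subsets of `E`. -/
abbrev ArensDual : Type _ :=
  UniformConvergenceCLM (RingHom.id ℝ) ℝ {K : Set E | Convex ℝ K ∧ Balanced ℝ K ∧ IsCompact K}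

/-- The Mackey dual `E'_μ`: the topological dual with the topology of uniform convergence on
absolutely convex weakly compact subsets of `E`. -/
abbrev MackeyDual : Type _ :=
  UniformConvergenceCLM (RingHom.id ℝ) ℝ
    {K : Set E | Convex ℝ K ∧ Balanced ℝ K ∧ IsCompact (⇑(toWeakSpace ℝ E) '' K)}

/-- The Schwartz ε-product `E ε F`: continuous linear maps from the Arens dual `E'_c` to `F`,
with the topology of uniform convergence on equicontinuous subsets of `E'`. -/
abbrev EpsProduct (F : Type*) [AddCommGroup F] [Module ℝ F] [TopologicalSpace F]
    [IsTopologicalAddGroup F] : Type _ :=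
  UniformConvergenceCLM (RingHom.id ℝ) F
    {H : Set (ArensDual E) | Equicontinuous fun f : H => (f.1 : E → ℝ)}

/-- The η-product `E η F`: continuous linear maps from the Mackey dual `E'_μ` to `F`,
with the topology of uniform convergence on equicontinuous subsets of `E'`. -/
abbrev EtaProduct (F : Type*) [AddCommGroup F] [Module ℝ F] [TopologicalSpace F]
    [IsTopologicalAddGroup F] : Type _ :=
  UniformConvergenceCLM (RingHom.id ℝ) F
    {H : Set (MackeyDual E) | Equicontinuous fun f : H => (f.1 : E → ℝ)}

/-! ### Auxiliary material for Statement 12 -/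

namespace KQCAux

open UniformConvergenceCLM

variable {M : Type*} [AddCommGroup M] [Module ℝ M] [TopologicalSpace M]

/-- The family of absolutely convex compact subsets of `M`. -/
abbrev ACC (M : Type*) [AddCommGroup M] [Module ℝ M] [TopologicalSpace M] : Set (Set M) :=
  {K : Set M | Convex ℝ K ∧ Balanced ℝ K ∧ IsCompact K}

theorem segSet_mem_ACC [ContinuousSMul ℝ M] (x : M) :
    ((· • x) '' Icc (-1 : ℝ) 1) ∈ ACC M := by
  refine ⟨?_, ?_, ?_⟩
  · have := (convex_Icc (-1 : ℝ) 1).is_linear_image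
      (IsLinearMap.isLinearMap_smul' x)
    simpa using this
  · rintro a ha y ⟨z, ⟨t, ht, rfl⟩, rfl⟩
    refine ⟨a * t, ?_, (smul_smul a t x).symm⟩
    have h1 : |a| ≤ 1 := by simpa [Real.norm_eq_abs] using ha
    have h2 : |t| ≤ 1 := abs_le.mpr ht
    have h3 : |a * t| ≤ 1 := by
      rw [abs_mul]
      nlinarith [abs_nonneg a, abs_nonneg t]
    exact abs_le.mp h3
  · exact isCompact_Icc.image (continuous_id.smul continuous_const)

theorem ACC_covers [ContinuousSMul ℝ M] : ⋃₀ ACC M = univ :=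
  eq_univ_of_forall fun x =>
    ⟨_, segSet_mem_ACC x, ⟨1, ⟨by norm_num, le_refl 1⟩, one_smul ℝ x⟩⟩

theorem zero_singleton_mem_ACC : ({0} : Set M) ∈ ACC M := by
  refine ⟨convex_singleton 0, ?_, isCompact_singleton⟩
  rintro a _ y ⟨z, hz, rfl⟩
  simp only [mem_singleton_iff] at hz
  simp [hz]

theorem isCompact_convexHull_union [ContinuousSMul ℝ M] [ContinuousAdd M]
    {s t : Set M} (hcs : Convex ℝ s) (hct : Convex ℝ t)
    (hs : IsCompact s) (ht : IsCompact t) :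
    IsCompact (convexHull ℝ (s ∪ t)) := by
  rcases s.eq_empty_or_nonempty with rfl | hsne
  · rwa [empty_union, hct.convexHull_eq]
  rcases t.eq_empty_or_nonempty with rfl | htne
  · rwa [union_empty, hcs.convexHull_eq]
  have himg : convexHull ℝ (s ∪ t) =
      (fun p : ℝ × M × M => p.1 • p.2.1 + (1 - p.1) • p.2.2) '' (Icc (0 : ℝ) 1 ×ˢ s ×ˢ t) := by
    rw [convexHull_union hsne htne, hcs.convexHull_eq, hct.convexHull_eq]
    ext y
    constructor
    · rw [mem_convexJoin]
      rintro ⟨a, ha, b, hb, ca, cb, hca, hcb, hsum, rfl⟩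
      refine ⟨(ca, a, b), ⟨⟨hca, by linarith⟩, ha, hb⟩, ?_⟩
      have hcb' : cb = 1 - ca := by linarith
      simp [hcb']
    · rintro ⟨⟨θ, a, b⟩, ⟨hθ, ha, hb⟩, rfl⟩
      rw [mem_convexJoin]
      exact ⟨a, ha, b, hb, θ, 1 - θ, hθ.1, by linarith [hθ.2], by ring, rfl⟩
  rw [himg]
  exact (isCompact_Icc.prod (hs.prod ht)).image (by fun_prop)

theorem ACC_directed [ContinuousSMul ℝ M] [ContinuousAdd M] :
    DirectedOn (· ⊆ ·) (ACC M) := by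
  rintro s ⟨hs1, hs2, hs3⟩ t ⟨ht1, ht2, ht3⟩
  exact ⟨convexHull ℝ (s ∪ t),
    ⟨convex_convexHull ℝ _, (hs2.union ht2).convexHull,
      isCompact_convexHull_union hs1 ht1 hs3 ht3⟩,
    subset_union_left.trans (subset_convexHull ℝ _),
    subset_union_right.trans (subset_convexHull ℝ _)⟩

theorem smul_mem_ACC [ContinuousSMul ℝ M] {s : Set M} (hs : s ∈ ACC M) (c : ℝ) :
    c • s ∈ ACC M := by
  refine ⟨hs.1.smul c, ?_, ?_⟩
  · rintro a ha y ⟨_, ⟨z, hz, rfl⟩, rfl⟩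
    show a • c • z ∈ c • s
    rw [smul_comm]
    exact smul_mem_smul_set (hs.2.1 a ha (smul_mem_smul_set hz))
  · rw [show c • s = (fun x => c • x) '' s from rfl]
    exact hs.2.2.image (continuous_const_smul c)

theorem isVonNBounded_of_isCompact {N : Type*} [AddCommGroup N] [Module ℝ N]
    [TopologicalSpace N] [IsTopologicalAddGroup N] [ContinuousSMul ℝ N]
    {s : Set N} (hs : IsCompact s) : IsVonNBounded ℝ s := by
  letI : UniformSpace N := IsTopologicalAddGroup.rightUniformSpace N
  haveI : IsUniformAddGroup N := isUniformAddGroup_of_addCommGroup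
  exact hs.totallyBounded.isVonNBounded ℝ

section Bounded

variable [IsTopologicalAddGroup M] [ContinuousSMul ℝ M]

theorem norm_le_of_smul_nhd {V : Set M} {ε : ℝ} (hε : 0 < ε)
    {φ : M → ℝ} (hsm : ∀ (c : ℝ) (x : M), φ (c • x) = c * φ x)
    (hb : ∀ x ∈ V, ‖φ x‖ ≤ 1) : ∀ x ∈ (ε • V : Set M), ‖φ x‖ ≤ ε := by
  rintro _ ⟨v, hv, rfl⟩
  rw [hsm ε v, Real.norm_eq_abs, abs_mul, abs_of_pos hε]
  have h1 : |φ v| ≤ 1 := by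
    have := hb v hv
    rwa [Real.norm_eq_abs] at this
  nlinarith [abs_nonneg (φ v)]

theorem equicontinuous_of_bounded_on_nhd {S : Set (M →L[ℝ] ℝ)} {V : Set M}
    (hV : V ∈ 𝓝 (0 : M)) (hb : ∀ f ∈ S, ∀ x ∈ V, ‖f x‖ ≤ 1) :
    Equicontinuous fun f : S => (⇑f.1 : M → ℝ) := by
  have h0 : EquicontinuousAt (fun f : S => (⇑f.1 : M → ℝ)) 0 := by
    intro U hU
    obtain ⟨ε, hε, hball⟩ := Metric.mem_uniformity_dist.mp hU
    have hmem : ((ε / 2) • V : Set M) ∈ 𝓝 (0 : M) := by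
      rw [set_smul_mem_nhds_zero_iff (by positivity : (ε / 2 : ℝ) ≠ 0)]
      exact hV
    filter_upwards [hmem] with x hx f
    have hle : ‖f.1 x‖ ≤ ε / 2 :=
      norm_le_of_smul_nhd (by positivity) (fun c y => map_smul f.1 c y)
        (hb f.1 f.2) x hx
    have hdist : dist (f.1 (0 : M)) (f.1 x) < ε := by
      rw [map_zero, dist_zero_left]
      linarith
    exact hball hdist
  exact equicontinuous_of_equicontinuousAt_zero (fun f : S => f.1) h0

theorem continuous_of_bounded_on_nhd (φ : M →ₗ[ℝ] ℝ) {V : Set M} (hV : V ∈ 𝓝 (0 : M))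
    (hb : ∀ x ∈ V, ‖φ x‖ ≤ 1) : Continuous φ := by
  have h0 : ContinuousAt φ.toAddMonoidHom 0 := by
    unfold ContinuousAt
    rw [map_zero, Metric.tendsto_nhds]
    intro ε hε
    have hmem : ((ε / 2) • V : Set M) ∈ 𝓝 (0 : M) := by
      rw [set_smul_mem_nhds_zero_iff (by positivity : (ε / 2 : ℝ) ≠ 0)]
      exact hV
    filter_upwards [hmem] with x hx
    rw [dist_zero_right]
    have hle : ‖φ x‖ ≤ ε / 2 :=
      norm_le_of_smul_nhd (by positivity) (fun c y => map_smul φ c y) hb x hx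
    calc ‖φ.toAddMonoidHom x‖ = ‖φ x‖ := rfl
      _ ≤ ε / 2 := hle
      _ < ε := by linarith
  exact continuous_of_continuousAt_zero φ.toAddMonoidHom h0

end Bounded

/-- Ascoli-type compactness criterion for sets of continuous linear functionals carrying
a topology of uniform convergence on a covering family of compact sets. -/
theorem isCompact_of_equicontinuous_aux {𝔖 : Set (Set M)} (hcov : ⋃₀ 𝔖 = univ)
    (hcpt : ∀ K ∈ 𝔖, IsCompact K) {S : Set (UniformConvergenceCLM (RingHom.id ℝ) ℝ 𝔖)}
    (heqc : Equicontinuous fun f : S => (⇑f.1 : M → ℝ))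
    (himg : IsCompact (range fun f : S => (⇑f.1 : M → ℝ))) :
    IsCompact S := by
  let F : S → (M → ℝ) := fun f => ⇑f.1
  have hind : IsInducing (UniformOnFun.ofFun 𝔖 ∘ F) :=
    ((UniformConvergenceCLM.isEmbedding_coeFn (RingHom.id ℝ) ℝ 𝔖).isInducing.comp
      IsInducing.subtypeVal)
  have hindF : IsInducing F :=
    (EquicontinuousOn.isInducing_uniformOnFun_iff_pi hcov hcpt
      (fun K _ => heqc.equicontinuousOn K)).mp hind
  have huniv : IsCompact (univ : Set S) := by
    rw [hindF.isCompact_iff, image_univ]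
    exact himg
  exact isCompact_iff_isCompact_univ.mpr huniv

/-- The polar of a neighborhood of zero is compact in the Arens dual. -/
theorem isCompact_polar_arens [IsTopologicalAddGroup M] [ContinuousSMul ℝ M]
    {V : Set M} (hV : V ∈ 𝓝 (0 : M)) :
    IsCompact {f : ArensDual M | ∀ x ∈ V, ‖f x‖ ≤ 1} := by
  set S : Set (ArensDual M) := {f : ArensDual M | ∀ x ∈ V, ‖f x‖ ≤ 1} with hSdef
  apply isCompact_of_equicontinuous_aux ACC_covers (fun K hK => hK.2.2)
  · exact equicontinuous_of_bounded_on_nhd hV (fun f hf => hf)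
  · set P : Set (M → ℝ) := {φ : M → ℝ | (∀ x y, φ (x + y) = φ x + φ y) ∧
      (∀ (c : ℝ) (x : M), φ (c • x) = c * φ x) ∧ ∀ x ∈ V, ‖φ x‖ ≤ 1} with hPdef
    have hrange : (range fun f : S => (⇑f.1 : M → ℝ)) = P := by
      ext φ
      constructor
      · rintro ⟨⟨f, hf⟩, rfl⟩
        exact ⟨fun x y => map_add f x y, fun c x => map_smul f c x, hf⟩
      · rintro ⟨h1, h2, h3⟩
        have hlin : IsLinearMap ℝ φ := ⟨h1, fun c x => h2 c x⟩
        have hcont : Continuous (IsLinearMap.mk' φ hlin) :=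
          continuous_of_bounded_on_nhd (IsLinearMap.mk' φ hlin) hV h3
        exact ⟨⟨(⟨IsLinearMap.mk' φ hlin, hcont⟩ : M →L[ℝ] ℝ), h3⟩, rfl⟩
    rw [hrange]
    have hbound : ∀ x : M, ∃ r : ℝ, ∀ φ ∈ P, ‖φ x‖ ≤ r := by
      intro x
      have htend : Tendsto (fun t : ℝ => t • x) (𝓝 0) (𝓝 (0 : M)) := by
        have hc : Continuous fun t : ℝ => t • x := continuous_id.smul continuous_const
        simpa using hc.tendsto 0
      obtain ⟨δ, hδ, hδV⟩ := Metric.eventually_nhds_iff.mp (htend.eventually_mem hV)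
      refine ⟨2 / δ, fun φ hφ => ?_⟩
      have hx : ((δ / 2) • x : M) ∈ V := by
        apply hδV
        simp only [dist_zero_right, Real.norm_eq_abs]
        rw [abs_of_pos (by positivity)]
        linarith
      have h1 : ‖φ ((δ / 2) • x)‖ ≤ 1 := hφ.2.2 _ hx
      have h2 : φ x = (2 / δ) * φ ((δ / 2) • x) := by
        rw [hφ.2.1, ← mul_assoc, show (2 / δ) * (δ / 2) = 1 by field_simp, one_mul]
      rw [h2, Real.norm_eq_abs, abs_mul, abs_of_pos (by positivity : (0:ℝ) < 2 / δ)]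
      rw [Real.norm_eq_abs] at h1
      calc 2 / δ * |φ ((δ / 2) • x)| ≤ 2 / δ * 1 :=
            mul_le_mul_of_nonneg_left h1 (by positivity)
        _ = 2 / δ := mul_one _
    choose r hr using hbound
    have hsub : P ⊆ univ.pi fun x => Icc (-(r x)) (r x) := by
      intro φ hφ
      refine mem_univ_pi.mpr fun x => ?_
      have := hr x φ hφ
      rw [Real.norm_eq_abs] at this
      exact mem_Icc.mpr (abs_le.mp this)
    have hclosed : IsClosed P := by
      rw [hPdef]
      simp only [setOf_and, setOf_forall]
      refine IsClosed.inter ?_ (IsClosed.inter ?_ ?_)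
      · exact isClosed_iInter fun x => isClosed_iInter fun y =>
          isClosed_eq (continuous_apply (x + y)) ((continuous_apply x).add (continuous_apply y))
      · exact isClosed_iInter fun c => isClosed_iInter fun x =>
          isClosed_eq (continuous_apply (c • x)) (continuous_const.mul (continuous_apply x))
      · exact isClosed_iInter fun x => isClosed_iInter fun _ =>
          isClosed_le (Continuous.norm (continuous_apply x)) continuous_const
    exact IsCompact.of_isClosed_subset (isCompact_univ_pi fun x => isCompact_Icc) hclosed hsub

/-- Hahn-Banach separation of a point from a closed absolutely convex set. -/
theorem exists_separating_functional {W : Type*} [AddCommGroup W] [Module ℝ W]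
    [TopologicalSpace W] [IsTopologicalAddGroup W] [ContinuousSMul ℝ W] [LocallyConvexSpace ℝ W]
    {D : Set W} (hDc : IsClosed D) (hconv : Convex ℝ D) (hbal : Balanced ℝ D)
    (h0 : (0 : W) ∈ D) {T : W} (hT : T ∉ D) :
    ∃ g : W →L[ℝ] ℝ, (∀ a ∈ D, ‖g a‖ ≤ 1) ∧ 1 < g T := by
  obtain ⟨f, u, hfD, hfT⟩ := geometric_hahn_banach_closed_point hconv hDc hT
  have hu : 0 < u := by
    have := hfD 0 h0
    simpa using this
  refine ⟨u⁻¹ • f, fun a ha => ?_, ?_⟩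
  · have h1 : f a < u := hfD a ha
    have hna : -a ∈ D := by
      have := hbal (-1) (by norm_num) (smul_mem_smul_set ha)
      simpa using this
    have h2 : -f a < u := by
      have := hfD (-a) hna
      rwa [map_neg] at this
    have habs : |f a| ≤ u := abs_le.mpr ⟨by linarith, h1.le⟩
    rw [ContinuousLinearMap.smul_apply, smul_eq_mul, Real.norm_eq_abs, abs_mul,
      abs_of_pos (inv_pos.mpr hu)]
    calc u⁻¹ * |f a| ≤ u⁻¹ * u := mul_le_mul_of_nonneg_left habs (inv_pos.mpr hu).le
      _ = 1 := inv_mul_cancel₀ hu.ne'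
  · rw [ContinuousLinearMap.smul_apply, smul_eq_mul]
    have h3 : u⁻¹ * u < u⁻¹ * f T := mul_lt_mul_of_pos_left hfT (inv_pos.mpr hu)
    rwa [inv_mul_cancel₀ hu.ne'] at h3

/-- Every continuous linear functional on a weak-* dual is evaluation at a point. -/
theorem weakDual_dual_eval {X : Type*} [AddCommGroup X] [Module ℝ X] [TopologicalSpace X]
    (g : WeakDual ℝ X →L[ℝ] ℝ) : ∃ f : X, ∀ w : WeakDual ℝ X, g w = w f := by
  classical
  have hb := LinearMap.hasBasis_weakBilin (topDualPairing ℝ X)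
  have hnb : ⇑g ⁻¹' Metric.ball (0 : ℝ) 1 ∈ 𝓝 (0 : WeakDual ℝ X) := by
    have h := g.continuous.tendsto (0 : WeakDual ℝ X)
    rw [map_zero] at h
    exact h (Metric.ball_mem_nhds 0 one_pos)
  obtain ⟨U, hU, hUsub⟩ := hb.mem_iff.mp hnb
  obtain ⟨s, ρ, hρ, rfl⟩ := (SeminormFamily.basisSets_iff _).mp hU
  have hker : ∀ w : WeakDual ℝ X, (∀ f ∈ s, w f = 0) → g w = 0 := by
    intro w hw
    have hmem : ∀ t : ℝ, t • w ∈
        Seminorm.ball (s.sup (topDualPairing ℝ X).toSeminormFamily) 0 ρ := by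
      intro t
      change (s.sup (topDualPairing ℝ X).toSeminormFamily) ((show X →L[ℝ] ℝ from t • w) - 0) < ρ
      rw [sub_zero]
      apply Seminorm.finset_sup_apply_lt hρ
      intro f hf
      show ‖t * w f‖ < ρ
      rw [hw f hf, mul_zero, norm_zero]
      exact hρ
    have hsmall : ∀ t : ℝ, 0 < t → t * ‖g w‖ < 1 := by
      intro t ht
      have h1 : g (t • w) ∈ Metric.ball (0 : ℝ) 1 := hUsub (hmem t)
      rw [Metric.mem_ball, dist_zero_right] at h1
      rwa [map_smul, smul_eq_mul, Real.norm_eq_abs, abs_mul, abs_of_pos ht,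
        ← Real.norm_eq_abs] at h1
    by_contra hne
    have hpos : 0 < ‖g w‖ := by
      rcases (norm_nonneg (g w)).lt_or_eq with h | h
      · exact h
      · exact absurd (norm_eq_zero.mp h.symm) hne
    have hcon := hsmall (2 / ‖g w‖) (by positivity)
    rw [div_mul_cancel₀ 2 hpos.ne'] at hcon
    norm_num at hcon
  let L : {f // f ∈ s} → (WeakDual ℝ X →ₗ[ℝ] ℝ) := fun f =>
    { toFun := fun w => w f.1
      map_add' := fun w w' => rfl
      map_smul' := fun c w => rfl }
  have hle : (⨅ i, LinearMap.ker (L i)) ≤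
      LinearMap.ker (g : WeakDual ℝ X →ₗ[ℝ] ℝ) := by
    intro w hw
    simp only [Submodule.mem_iInf, LinearMap.mem_ker] at hw ⊢
    exact hker w fun f hf => hw ⟨f, hf⟩
  have hspan := mem_span_of_iInf_ker_le_ker hle
  rw [Submodule.mem_span_range_iff_exists_fun] at hspan
  obtain ⟨c, hc⟩ := hspan
  refine ⟨∑ i : {f // f ∈ s}, c i • (i.1 : X), fun w => ?_⟩
  have h1 : (∑ i : {f // f ∈ s}, c i • L i) w = g w := by rw [hc]; rfl
  rw [← h1, LinearMap.sum_apply, map_sum]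
  refine Finset.sum_congr rfl fun i _ => ?_
  rw [LinearMap.smul_apply, map_smul]
  rfl

section Eval

variable [ContinuousSMul ℝ M]

/-- Evaluation at a point of `M`, as a continuous linear functional on the Arens dual. -/
noncomputable def evCLM (x : M) : ArensDual (ArensDual M) :=
  ⟨⟨⟨fun f : ArensDual M => f x, fun f g => rfl⟩, fun c f => rfl⟩, by
    haveI := UniformConvergenceCLM.continuousEvalConst (RingHom.id ℝ) ℝ (ACC M)
      (ACC_covers (M := M))
    exact continuous_eval_const x⟩

@[simp] theorem evCLM_apply (x : M) (f : ArensDual M) : evCLM x f = f x := rfl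

/-- Evaluation as a linear map into the double Arens dual. -/
noncomputable def evLM : M →ₗ[ℝ] ArensDual (ArensDual M) where
  toFun := evCLM
  map_add' x y := by
    apply ContinuousLinearMap.ext
    intro f
    exact map_add f x y
  map_smul' c x := by
    apply ContinuousLinearMap.ext
    intro f
    exact map_smul f c x

@[simp] theorem evLM_apply (x : M) (f : ArensDual M) : evLM x f = f x := rfl

/-- Evaluation as a map into the weak-* dual of the Arens dual. -/
noncomputable def evW (x : M) : WeakDual ℝ (ArensDual M) := evCLM x

theorem continuous_evW : Continuous (evW : M → WeakDual ℝ (ArensDual M)) :=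
  WeakDual.continuous_of_continuous_eval fun f => map_continuous f

end Eval

section MackeyArens

variable [IsTopologicalAddGroup M] [ContinuousSMul ℝ M]

/-- **Mackey–Arens**: every continuous linear functional on the Arens dual
is evaluation at a point. -/
theorem arens_eval_surjective (T : ArensDual (ArensDual M)) :
    ∃ x : M, ∀ f : ArensDual M, T f = f x := by
  classical
  haveI : ContinuousSMul ℝ (ArensDual M) :=
    UniformConvergenceCLM.continuousSMul _ _ _ fun S hS => isVonNBounded_of_isCompact hS.2.2
  have hb := UniformConvergenceCLM.hasBasis_nhds_zero (RingHom.id ℝ) ℝ (ACC M)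
    ⟨{0}, zero_singleton_mem_ACC⟩ ACC_directed
  have hTc : Continuous (⇑T : ArensDual M → ℝ) := map_continuous T
  have hnb : ⇑T ⁻¹' Metric.ball (0 : ℝ) 1 ∈ 𝓝 (0 : ArensDual M) := by
    have h := hTc.tendsto (0 : ArensDual M)
    rw [map_zero] at h
    exact h (Metric.ball_mem_nhds 0 one_pos)
  obtain ⟨⟨S, Vr⟩, ⟨hS, hVr⟩, hsub⟩ := hb.mem_iff.mp hnb
  obtain ⟨δ, hδ, hδV⟩ := Metric.mem_nhds_iff.mp hVr
  set S' : Set M := (2 / δ) • S with hS'def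
  have hS' : S' ∈ ACC M := smul_mem_ACC hS (2 / δ)
  have hbound : ∀ f : ArensDual M, (∀ x ∈ S', ‖f x‖ ≤ 1) → ‖T f‖ ≤ 1 := by
    intro f hf
    have hfS : ∀ x ∈ S, (f x : ℝ) ∈ Vr := by
      intro x hx
      have hmem : ((2 / δ) • x : M) ∈ S' := smul_mem_smul_set hx
      have h1 : ‖f ((2 / δ) • x)‖ ≤ 1 := hf _ hmem
      rw [map_smul, smul_eq_mul, Real.norm_eq_abs, abs_mul,
        abs_of_pos (by positivity : (0:ℝ) < 2 / δ)] at h1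
      have h2 : |f x| ≤ δ / 2 := by
        have h4 := mul_le_mul_of_nonneg_left h1 (by positivity : (0:ℝ) ≤ δ / 2)
        rw [← mul_assoc, show (δ / 2) * (2 / δ) = 1 by field_simp, one_mul, mul_one] at h4
        exact h4
      apply hδV
      simp only [Metric.mem_ball, dist_zero_right, Real.norm_eq_abs]
      linarith
    have hmem : T f ∈ Metric.ball (0 : ℝ) 1 := hsub hfS
    rw [Metric.mem_ball, dist_zero_right] at hmem
    exact hmem.le
  rcases S'.eq_empty_or_nonempty with hSe | hSne
  · refine ⟨0, fun f => ?_⟩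
    have hzero : ∀ f : ArensDual M, ‖T f‖ ≤ 1 := fun f =>
      hbound f (by rw [hSe]; simp)
    have hTf : T f = 0 := by
      by_contra hne
      have hpos : 0 < ‖T f‖ := norm_pos_iff.mpr hne
      have hcon := hzero ((2 / ‖T f‖) • f)
      rw [map_smul, smul_eq_mul, Real.norm_eq_abs, abs_mul,
        abs_of_pos (by positivity : (0:ℝ) < 2 / ‖T f‖), ← Real.norm_eq_abs,
        div_mul_cancel₀ 2 hpos.ne'] at hcon
      norm_num at hcon
    rw [hTf]
    exact (map_zero f).symm
  · have h0S' : (0 : M) ∈ S' := by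
      obtain ⟨x, hx⟩ := hSne
      have := hS'.2.1 0 (by simp) (smul_mem_smul_set hx)
      simpa using this
    haveI : LocallyConvexSpace ℝ (WeakDual ℝ (ArensDual M)) :=
      (inferInstance : LocallyConvexSpace ℝ (WeakBilin (topDualPairing ℝ (ArensDual M))))
    set D : Set (WeakDual ℝ (ArensDual M)) := evW '' S' with hD
    have hDcpt : IsCompact D := (hS'.2.2).image continuous_evW
    have hDclosed : IsClosed D := hDcpt.isClosed
    have hDconv : Convex ℝ D :=
      hS'.1.is_linear_image ⟨fun x y => by
          apply ContinuousLinearMap.ext; intro f; exact map_add f x y,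
        fun c x => by
          apply ContinuousLinearMap.ext; intro f; exact map_smul f c x⟩
    have hDbal : Balanced ℝ D := by
      rintro a ha y ⟨_, ⟨x, hx, rfl⟩, rfl⟩
      refine ⟨a • x, hS'.2.1 a ha (smul_mem_smul_set hx), ?_⟩
      apply ContinuousLinearMap.ext
      intro f
      exact map_smul f a x
    have hD0 : (0 : WeakDual ℝ (ArensDual M)) ∈ D := by
      refine ⟨0, h0S', ?_⟩
      apply ContinuousLinearMap.ext
      intro f
      exact map_zero f
    by_cases hTD : (T : WeakDual ℝ (ArensDual M)) ∈ D
    · obtain ⟨x, hx, hTx⟩ := hTD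
      refine ⟨x, fun f => ?_⟩
      exact (DFunLike.congr_fun hTx f).symm
    · exfalso
      obtain ⟨g, hgD, hgT⟩ :=
        exists_separating_functional hDclosed hDconv hDbal hD0 hTD
      obtain ⟨f₀, hf₀⟩ := weakDual_dual_eval g
      have hf₀S : ∀ x ∈ S', ‖f₀ x‖ ≤ 1 := by
        intro x hx
        have h1 : ‖g (evW x)‖ ≤ 1 := hgD _ ⟨x, hx, rfl⟩
        rwa [hf₀] at h1
      have h2 : ‖T f₀‖ ≤ 1 := hbound f₀ hf₀S
      have h3 : (1 : ℝ) < T f₀ := by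
        have h4 := hgT
        exact h4.trans_eq (hf₀ _)
      have h5 : (1 : ℝ) < ‖T f₀‖ := lt_of_lt_of_le h3 (le_abs_self _)
      linarith

end MackeyArens

end KQCAux

/-- If `E` is a k-quasi-complete Hausdorff locally convex space over `ℝ`,
then `E` equipped with its γ-topology, i.e. the double Arens dual `(E'_c)'_c`, is again
k-quasi-complete. -/
theorem kQuasiComplete_doubleArensDual
    (E : Type*) [AddCommGroup E] [Module ℝ E] [TopologicalSpace E] [IsTopologicalAddGroup E]
    [ContinuousSMul ℝ E] [LocallyConvexSpace ℝ E] [T2Space E]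
    (hE : KQuasiComplete E) :
    KQuasiComplete (ArensDual (ArensDual E)) := by
  classical
  intro K hK
  haveI hXsm : ContinuousSMul ℝ (ArensDual E) :=
    UniformConvergenceCLM.continuousSMul _ _ _ fun S hS =>
      KQCAux.isVonNBounded_of_isCompact hS.2.2
  haveI hGT2 : T2Space (ArensDual (ArensDual E)) :=
    UniformConvergenceCLM.t2Space _ _ _ (KQCAux.ACC_covers (M := ArensDual E))
  rcases K.eq_empty_or_nonempty with rfl | hKne
  · have hbe : balancedHull ℝ (∅ : Set (ArensDual (ArensDual E))) = ∅ := by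
      simp [balancedHull]
    rw [hbe, convexHull_empty, closure_empty]
    exact isCompact_empty
  have hsurj : Function.Surjective (KQCAux.evLM : E →ₗ[ℝ] ArensDual (ArensDual E)) := by
    intro T
    obtain ⟨x, hx⟩ := KQCAux.arens_eval_surjective T
    refine ⟨x, ?_⟩
    apply ContinuousLinearMap.ext
    intro f
    exact (hx f).symm
  have hinj : Function.Injective (KQCAux.evLM : E →ₗ[ℝ] ArensDual (ArensDual E)) := by
    rw [injective_iff_map_eq_zero]
    intro x hx
    by_contra hne
    obtain ⟨f, hf⟩ := SeparatingDual.exists_ne_zero (R := ℝ) hne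
    exact hf (DFunLike.congr_fun hx f)
  set e := LinearEquiv.ofBijective KQCAux.evLM ⟨hinj, hsurj⟩ with he
  have hΦ0 : ContinuousAt (⇑e.symm : ArensDual (ArensDual E) → E) 0 := by
    unfold ContinuousAt
    rw [map_zero, Filter.tendsto_def]
    intro U hU
    obtain ⟨U₁, hU₁, hU₁closed, hU₁U⟩ := exists_mem_nhds_isClosed_subset hU
    obtain ⟨V, ⟨hVnhds, hVbal, hVconv⟩, hVU₁⟩ :=
      (nhds_hasBasis_absConvex ℝ E).mem_iff.mp hU₁
    set Vc := closure V with hVc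
    have hVcsub : Vc ⊆ U := (closure_minimal hVU₁ hU₁closed).trans hU₁U
    have hVcnhds : Vc ∈ 𝓝 (0 : E) := mem_of_superset hVnhds subset_closure
    have hVcconv : Convex ℝ Vc := hVconv.closure
    have hVcbal : Balanced ℝ Vc := hVbal.closure
    set Mset : Set (ArensDual E) := {f : ArensDual E | ∀ x ∈ Vc, ‖f x‖ ≤ 1} with hM
    have hMcpt : IsCompact Mset := KQCAux.isCompact_polar_arens hVcnhds
    have hMconv : Convex ℝ Mset := by
      intro f hf g hg a b ha hb hab
      intro x hx
      have hfx := hf x hx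
      have hgx := hg x hx
      calc ‖(a • f + b • g) x‖ = ‖a * f x + b * g x‖ := rfl
        _ ≤ ‖a * f x‖ + ‖b * g x‖ := norm_add_le _ _
        _ = a * ‖f x‖ + b * ‖g x‖ := by
            rw [norm_mul, norm_mul, Real.norm_eq_abs a, Real.norm_eq_abs b,
              abs_of_nonneg ha, abs_of_nonneg hb]
        _ ≤ a * 1 + b * 1 :=
            add_le_add (mul_le_mul_of_nonneg_left hfx ha)
              (mul_le_mul_of_nonneg_left hgx hb)
        _ = 1 := by rw [mul_one, mul_one, hab]
    have hMbal : Balanced ℝ Mset := by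
      rintro a ha f ⟨g, hg, rfl⟩ x hx
      calc ‖(a • g) x‖ = ‖a‖ * ‖g x‖ := norm_mul a (g x)
        _ ≤ 1 * 1 := mul_le_mul ha (hg x hx) (norm_nonneg _) zero_le_one
        _ = 1 := one_mul 1
    have hMACC : Mset ∈ KQCAux.ACC (ArensDual E) := ⟨hMconv, hMbal, hMcpt⟩
    have hN := UniformConvergenceCLM.eventually_nhds_zero_mapsTo (RingHom.id ℝ) hMACC
      (Metric.closedBall_mem_nhds (0 : ℝ) one_pos)
    filter_upwards [hN] with T hT
    have hxT : ∀ f : ArensDual E, T f = f (e.symm T) := by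
      intro f
      exact (DFunLike.congr_fun (e.apply_symm_apply T) f).symm
    have hxVc : e.symm T ∈ Vc := by
      by_contra hxV
      obtain ⟨g, hgb, hgx⟩ := KQCAux.exists_separating_functional isClosed_closure
        hVcconv hVcbal (subset_closure (mem_of_mem_nhds hVnhds)) hxV
      have hgM : (g : ArensDual E) ∈ Mset := fun y hy => hgb y hy
      have hTg := hT hgM
      rw [Metric.mem_closedBall, dist_zero_right, hxT g] at hTg
      have hgt : (1 : ℝ) < ‖g (e.symm T)‖ := lt_of_lt_of_le hgx (le_abs_self _)
      exact (not_le.mpr hgt) hTg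
    exact hVcsub hxVc
  have hΦc : Continuous (⇑e.symm : ArensDual (ArensDual E) → E) := by
    have hc := continuous_of_continuousAt_zero (e.symm.toLinearMap.toAddMonoidHom)
      (by exact hΦ0)
    exact hc
  set A : Set E := ⇑e.symm '' K with hA
  have hAcpt : IsCompact A := hK.image hΦc
  set C₀ := closure (convexHull ℝ (balancedHull ℝ A)) with hC₀
  have hC₀cpt : IsCompact C₀ := hE A hAcpt
  have hC₀conv : Convex ℝ C₀ := (convex_convexHull ℝ _).closure
  have hC₀bal : Balanced ℝ C₀ := ((balancedHull.balanced A).convexHull).closure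
  have hAC₀ : A ⊆ C₀ :=
    (subset_balancedHull ℝ).trans ((subset_convexHull ℝ _).trans subset_closure)
  set D : Set (ArensDual (ArensDual E)) := ⇑KQCAux.evLM '' C₀ with hD
  have hDcpt : IsCompact D := by
    apply KQCAux.isCompact_of_equicontinuous_aux (KQCAux.ACC_covers (M := ArensDual E))
      (fun Kk hKk => hKk.2.2)
    · apply KQCAux.equicontinuous_of_bounded_on_nhd
        (V := {f : ArensDual E | MapsTo ⇑f C₀ (Metric.closedBall (0 : ℝ) 1)})
      · exact UniformConvergenceCLM.eventually_nhds_zero_mapsTo (RingHom.id ℝ)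
          (⟨hC₀conv, hC₀bal, hC₀cpt⟩ : C₀ ∈ KQCAux.ACC E)
          (Metric.closedBall_mem_nhds (0 : ℝ) one_pos)
      · rintro T ⟨x, hx, rfl⟩ f hf
        have hfx := hf hx
        rw [Metric.mem_closedBall, dist_zero_right] at hfx
        exact hfx
    · have hre : (range fun T : D => (⇑T.1 : ArensDual E → ℝ)) =
          (fun x : E => (fun f : ArensDual E => (f x : ℝ))) '' C₀ := by
        ext φ
        constructor
        · rintro ⟨⟨T, x, hx, rfl⟩, rfl⟩
          exact ⟨x, hx, rfl⟩
        · rintro ⟨x, hx, rfl⟩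
          exact ⟨⟨KQCAux.evLM x, ⟨x, hx, rfl⟩⟩, rfl⟩
      rw [hre]
      exact hC₀cpt.image (continuous_pi fun f => map_continuous f)
  have hKD : K ⊆ D := fun T hT =>
    ⟨e.symm T, hAC₀ (mem_image_of_mem _ hT), e.apply_symm_apply T⟩
  have hDconv : Convex ℝ D :=
    hC₀conv.is_linear_image ⟨fun x y => map_add KQCAux.evLM x y,
      fun c x => map_smul KQCAux.evLM c x⟩
  have hDbal : Balanced ℝ D := by
    rintro a ha y ⟨_, ⟨x, hx, rfl⟩, rfl⟩
    exact ⟨a • x, hC₀bal a ha (smul_mem_smul_set hx), map_smul KQCAux.evLM a x⟩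
  have hhull : convexHull ℝ (balancedHull ℝ K) ⊆ D :=
    convexHull_min (hDbal.balancedHull_subset_of_subset hKD) hDconv
  exact hDcpt.of_isClosed_subset isClosed_closure (closure_minimal hhull hDcpt.isClosed)
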